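/- There exists a self-conjugate 3-core partition of n if and only if n = r(3r+2) or n = r(3r−2) for some integer r ≥ 1 (equivalently n = r(3r±2)); moreover when it exists, the self-conjugate 3-core partition of n is unique. -/

import Mathlib

/-- Hook length of the (0-indexed) cell `(i, j)` of a Young diagram. -/
def hookLen (γ : YoungDiagram) (i j : ℕ) : ℕ :=
  γ.rowLen i + γ.colLen j - i - j - 1

/-- A partition (Young diagram) is `t`-core if no hook length is divisible by `t`. -/
def IsTCore (γ : YoungDiagram) (t : ℕ) : Prop :=
  ∀ c ∈ γ.cells, ¬ t ∣ hookLen γ c.1 c.2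

/-- The side length of the Durfee square: the number of diagonal cells. -/
def durfee (γ : YoungDiagram) : ℕ :=
  (γ.cells.filter fun c => c.1 = c.2).card

namespace SC3

/-- explicit row-length function of the diagram `D m` -/
def R (m i : ℕ) : ℕ := if 3 * i < m then m - 2 * i else (m - i + 1) / 2

/-- The self-conjugate 3-core diagram with parameter m (m % 3 ≠ 2). -/
def D (m : ℕ) : YoungDiagram where
  cells := (Finset.range m ×ˢ Finset.range m).filter
      fun c => 2 * min c.1 c.2 + max c.1 c.2 < m
  isLowerSet := by
    rintro ⟨x, y⟩ ⟨a, b⟩ ⟨h1, h2⟩ hy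
    simp only [Finset.coe_filter, Set.mem_setOf_eq, Finset.mem_product, Finset.mem_range] at *
    have hmin : min a b ≤ min x y := min_le_min h1 h2
    have hmax : max a b ≤ max x y := max_le_max h1 h2
    omega

lemma mem_D {m : ℕ} {c : ℕ × ℕ} : c ∈ D m ↔ 2 * min c.1 c.2 + max c.1 c.2 < m := by
  obtain ⟨i, j⟩ := c
  rw [← YoungDiagram.mem_cells]
  simp only [D, YoungDiagram.mem_mk, Finset.mem_filter, Finset.mem_product, Finset.mem_range]
  constructor
  · tauto
  · intro h
    have h1 : i ≤ max i j := le_max_left _ _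
    have h2 : j ≤ max i j := le_max_right _ _
    omega

lemma transpose_D (m : ℕ) : (D m).transpose = D m := by
  ext ⟨i, j⟩
  rw [YoungDiagram.mem_cells, YoungDiagram.mem_cells, YoungDiagram.mem_transpose,
    mem_D, mem_D]
  simp [min_comm, max_comm]

lemma rowLen_eq_of {γ : YoungDiagram} {i k : ℕ} (h : ∀ j, (i, j) ∈ γ ↔ j < k) :
    γ.rowLen i = k := by
  rcases Nat.lt_trichotomy (γ.rowLen i) k with hl | he | hg
  · have := (h (γ.rowLen i)).2 hl
    rw [YoungDiagram.mem_iff_lt_rowLen] at this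
    omega
  · exact he
  · have := (h k).1 (YoungDiagram.mem_iff_lt_rowLen.2 hg)
    omega

lemma rowLen_D (m i : ℕ) : (D m).rowLen i = R m i := by
  apply rowLen_eq_of
  intro j
  rw [mem_D]
  simp only [R]
  rcases le_total i j with h | h
  · rw [min_eq_left h, max_eq_right h]
    split_ifs <;> omega
  · rw [min_eq_right h, max_eq_left h]
    split_ifs <;> omega

lemma colLen_D (m j : ℕ) : (D m).colLen j = R m j := by
  rw [← YoungDiagram.rowLen_transpose, transpose_D, rowLen_D]

end SC3

namespace SC3

lemma hookLen_D {m i j : ℕ} : hookLen (D m) i j = R m i + R m j - i - j - 1 := by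
  rw [hookLen, rowLen_D, colLen_D]

lemma isTCore_D {m : ℕ} (hm : m % 3 ≠ 2) : IsTCore (D m) 3 := by
  have key : ∀ i j : ℕ, i ≤ j → 2 * i + j < m → ¬ 3 ∣ (R m i + R m j - i - j - 1) := by
    intro i j hij hcell
    simp only [R]
    split_ifs <;> omega
  rintro ⟨i, j⟩ hc
  rw [YoungDiagram.mem_cells, mem_D] at hc
  rw [hookLen_D]
  rcases le_total i j with h | h
  · rw [min_eq_left h, max_eq_right h] at hc
    exact key i j h hc
  · rw [min_eq_right h, max_eq_left h] at hc
    have heq : R m i + R m j - i - j - 1 = R m j + R m i - j - i - 1 := by omega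
    rw [heq]
    exact key j i h hc

end SC3

namespace SC3

lemma mem_interior_aux (γ : YoungDiagram) (c : ℕ × ℕ) :
    c ∈ (γ.cells.filter fun c => 1 ≤ c.1 ∧ 1 ≤ c.2).image (fun c => (c.1 - 1, c.2 - 1)) ↔
      (c.1 + 1, c.2 + 1) ∈ γ := by
  obtain ⟨i, j⟩ := c
  simp only [Finset.mem_image, Finset.mem_filter]
  constructor
  · rintro ⟨⟨p, q⟩, ⟨hpq, hp, hq⟩, heq⟩
    simp only [Prod.mk.injEq] at heq
    rw [YoungDiagram.mem_cells] at hpq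
    have hh : (p, q) = (i + 1, j + 1) := by simp only [Prod.mk.injEq]; omega
    rwa [hh] at hpq
  · intro h
    exact ⟨(i + 1, j + 1), ⟨YoungDiagram.mem_cells _ |>.2 h, by omega, by omega⟩, by simp⟩

/-- the diagram obtained by deleting the first row and first column -/
def interior (γ : YoungDiagram) : YoungDiagram where
  cells := (γ.cells.filter fun c => 1 ≤ c.1 ∧ 1 ≤ c.2).image fun c => (c.1 - 1, c.2 - 1)
  isLowerSet := by
    rintro ⟨x, y⟩ ⟨a, b⟩ ⟨h1, h2⟩ hy
    have hy' := (mem_interior_aux γ (x, y)).1 hy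
    have : (a + 1, b + 1) ∈ γ :=
      γ.up_left_mem (by simpa using Nat.add_le_add_right h1 1)
        (by simpa using Nat.add_le_add_right h2 1) hy'
    exact (mem_interior_aux γ (a, b)).2 this

lemma mem_interior {γ : YoungDiagram} {c : ℕ × ℕ} :
    c ∈ interior γ ↔ (c.1 + 1, c.2 + 1) ∈ γ := by
  exact mem_interior_aux γ c

lemma rowLen_interior {γ : YoungDiagram} (i : ℕ) :
    (interior γ).rowLen i = γ.rowLen (i + 1) - 1 := by
  apply rowLen_eq_of
  intro j
  rw [mem_interior]
  simp only
  rw [YoungDiagram.mem_iff_lt_rowLen]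
  omega

lemma colLen_interior {γ : YoungDiagram} (j : ℕ) :
    (interior γ).colLen j = γ.colLen (j + 1) - 1 := by
  have h : ∀ i, (i, j) ∈ interior γ ↔ i < γ.colLen (j + 1) - 1 := by
    intro i
    rw [mem_interior]
    simp only
    rw [YoungDiagram.mem_iff_lt_colLen]
    omega
  rcases Nat.lt_trichotomy ((interior γ).colLen j) (γ.colLen (j + 1) - 1) with hl | he | hg
  · have := (h _).2 hl
    rw [YoungDiagram.mem_iff_lt_colLen] at this
    omega
  · exact he
  · have := (h _).1 (YoungDiagram.mem_iff_lt_colLen.2 hg)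
    omega

lemma transpose_interior {γ : YoungDiagram} (h : γ.transpose = γ) :
    (interior γ).transpose = interior γ := by
  ext ⟨i, j⟩
  rw [YoungDiagram.mem_cells, YoungDiagram.mem_cells, YoungDiagram.mem_transpose,
    mem_interior, mem_interior]
  simp only [Prod.swap]
  constructor
  · intro hm
    rw [← h, YoungDiagram.mem_transpose]
    exact hm
  · intro hm
    rw [← h, YoungDiagram.mem_transpose] at hm
    exact hm

lemma hookLen_interior {γ : YoungDiagram} {i j : ℕ} (hc : (i, j) ∈ interior γ) :
    hookLen (interior γ) i j = hookLen γ (i + 1) (j + 1) := by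
  have h1 : j + 1 < γ.rowLen (i + 1) := by
    rw [← YoungDiagram.mem_iff_lt_rowLen]
    exact mem_interior.1 hc
  have h2 : i + 1 < γ.colLen (j + 1) := by
    rw [← YoungDiagram.mem_iff_lt_colLen]
    exact mem_interior.1 hc
  rw [hookLen, hookLen, rowLen_interior, colLen_interior]
  omega

lemma isTCore_interior {γ : YoungDiagram} (h : IsTCore γ 3) : IsTCore (interior γ) 3 := by
  rintro ⟨i, j⟩ hc
  rw [YoungDiagram.mem_cells] at hc
  rw [hookLen_interior hc]
  exact h (i + 1, j + 1) (YoungDiagram.mem_cells _ |>.2 (mem_interior.1 hc))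

lemma card_interior_lt {γ : YoungDiagram} (h0 : (0, 0) ∈ γ) :
    (interior γ).cells.card < γ.cells.card := by
  have h1 : (interior γ).cells.card ≤ (γ.cells.filter fun c => 1 ≤ c.1 ∧ 1 ≤ c.2).card :=
    Finset.card_image_le
  have h2 : (γ.cells.filter fun c => 1 ≤ c.1 ∧ 1 ≤ c.2) ⊂ γ.cells := by
    refine ⟨Finset.filter_subset _ _, fun hsub => ?_⟩
    have := hsub (YoungDiagram.mem_cells _ |>.2 h0)
    simp at this
  exact lt_of_le_of_lt h1 (Finset.card_lt_card h2)

end SC3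

namespace SC3

lemma card_decomp {γ : YoungDiagram} (h0 : (0, 0) ∈ γ) :
    γ.cells.card = (interior γ).cells.card + γ.rowLen 0 + γ.colLen 0 - 1 := by
  classical
  have hsplit1 := Finset.card_filter_add_card_filter_not
    (s := γ.cells) (p := fun c => c.1 = 0)
  have hsplit2 := Finset.card_filter_add_card_filter_not
    (s := γ.cells.filter fun c => ¬ c.1 = 0) (p := fun c => c.2 = 0)
  -- card of first row
  have hA : (γ.cells.filter fun c => c.1 = 0).card = γ.rowLen 0 := by
    have : (γ.cells.filter fun c => c.1 = 0) =
        (Finset.range (γ.rowLen 0)).image fun j => ((0 : ℕ), j) := by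
      ext ⟨i, j⟩
      simp only [Finset.mem_filter, Finset.mem_image, Finset.mem_range,
        YoungDiagram.mem_cells, Prod.mk.injEq]
      constructor
      · rintro ⟨hm, hi⟩
        subst hi
        exact ⟨j, YoungDiagram.mem_iff_lt_rowLen.1 hm, rfl, rfl⟩
      · rintro ⟨j', hj', rfl, rfl⟩
        exact ⟨YoungDiagram.mem_iff_lt_rowLen.2 hj', rfl⟩
    rw [this, Finset.card_image_of_injective _ (by intro a b h; simpa using h),
      Finset.card_range]
  -- card of first column minus corner
  have hB : ((γ.cells.filter fun c => ¬ c.1 = 0).filter fun c => c.2 = 0).card =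
      γ.colLen 0 - 1 := by
    have : ((γ.cells.filter fun c => ¬ c.1 = 0).filter fun c => c.2 = 0) =
        (Finset.Ico 1 (γ.colLen 0)).image fun i => (i, (0 : ℕ)) := by
      ext ⟨i, j⟩
      simp only [Finset.mem_filter, Finset.mem_image, Finset.mem_Ico,
        YoungDiagram.mem_cells, Prod.mk.injEq]
      constructor
      · rintro ⟨⟨hm, hi⟩, hj⟩
        subst hj
        exact ⟨i, ⟨by omega, YoungDiagram.mem_iff_lt_colLen.1 hm⟩, rfl, rfl⟩
      · rintro ⟨i', ⟨h1, h2⟩, rfl, rfl⟩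
        exact ⟨⟨YoungDiagram.mem_iff_lt_colLen.2 h2, by omega⟩, rfl⟩
    rw [this, Finset.card_image_of_injective _ (by intro a b h; simpa using h),
      Nat.card_Ico]
  -- card of the rest equals interior
  have hC : ((γ.cells.filter fun c => ¬ c.1 = 0).filter fun c => ¬ c.2 = 0).card =
      (interior γ).cells.card := by
    have hset : ((γ.cells.filter fun c => ¬ c.1 = 0).filter fun c => ¬ c.2 = 0) =
        γ.cells.filter fun c => 1 ≤ c.1 ∧ 1 ≤ c.2 := by
      rw [Finset.filter_filter]
      apply Finset.filter_congr
      intro c _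
      omega
    have hcells : (interior γ).cells =
        (γ.cells.filter fun c => 1 ≤ c.1 ∧ 1 ≤ c.2).image fun c => (c.1 - 1, c.2 - 1) :=
      rfl
    rw [hset, hcells, Finset.card_image_of_injOn]
    rintro ⟨a, b⟩ ha ⟨x, y⟩ hx hxy
    simp only [Finset.mem_coe, Finset.mem_filter] at ha hx
    simp only [Prod.mk.injEq] at hxy ⊢
    omega
  have hcol : 1 ≤ γ.colLen 0 := YoungDiagram.mem_iff_lt_colLen.1 h0
  omega

end SC3

namespace SC3

lemma interior_D (m : ℕ) : interior (D m) = D (m - 3) := by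
  ext ⟨i, j⟩
  rw [YoungDiagram.mem_cells, YoungDiagram.mem_cells, mem_interior, mem_D, mem_D]
  simp only
  have h1 : min (i + 1) (j + 1) = min i j + 1 := by
    rcases le_total i j with h | h <;> simp [min_eq_left, min_eq_right, h]
  have h2 : max (i + 1) (j + 1) = max i j + 1 := by
    rcases le_total i j with h | h <;> simp [max_eq_left, max_eq_right, h]
  omega

lemma zero_mem_D {m : ℕ} (hm : 1 ≤ m) : ((0 : ℕ), (0 : ℕ)) ∈ D m := by
  rw [mem_D]; simp; omega

lemma card_D_zero : (D 0).cells.card = 0 := by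
  simp [D]

lemma card_D_step (m : ℕ) : (D (m + 3)).cells.card = (D m).cells.card + (2 * m + 5) := by
  have h := card_decomp (γ := D (m + 3)) (zero_mem_D (by omega))
  rw [interior_D, rowLen_D, colLen_D] at h
  simp only [Nat.add_sub_cancel] at h
  rw [h, R]
  split_ifs with h' <;> omega

lemma card_D_mul3 (r : ℕ) : (D (3 * r)).cells.card = r * (3 * r + 2) := by
  induction r with
  | zero => simpa using card_D_zero
  | succ k ih =>
    have : 3 * (k + 1) = 3 * k + 3 := by ring
    rw [this, card_D_step, ih]
    ring

lemma card_D_mul3add1 (r : ℕ) : (D (3 * r + 1)).cells.card = (r + 1) * (3 * r + 1) := by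
  induction r with
  | zero => simp; decide
  | succ k ih =>
    have : 3 * (k + 1) + 1 = (3 * k + 1) + 3 := by ring
    rw [this, card_D_step, ih]
    ring

lemma card_D_strictMono : StrictMono fun m => (D m).cells.card := by
  apply strictMono_nat_of_lt_succ
  intro m
  apply Finset.card_lt_card
  constructor
  · intro c hc
    rw [YoungDiagram.mem_cells, mem_D] at *
    omega
  · intro hsub
    have := hsub (YoungDiagram.mem_cells ((0 : ℕ), m) |>.2 (by rw [mem_D]; simp))
    rw [YoungDiagram.mem_cells, mem_D] at this
    simp at this

end SC3

namespace SC3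

lemma colLen_of_sc {γ : YoungDiagram} (hsc : γ.transpose = γ) (j : ℕ) :
    γ.colLen j = γ.rowLen j := by
  conv_rhs => rw [← hsc]
  rw [YoungDiagram.rowLen_transpose]

lemma eq_of_parts {γ₁ γ₂ : YoungDiagram} (h0 : γ₁.rowLen 0 = γ₂.rowLen 0)
    (h0' : γ₁.colLen 0 = γ₂.colLen 0) (hint : interior γ₁ = interior γ₂) : γ₁ = γ₂ := by
  ext ⟨i, j⟩
  rw [YoungDiagram.mem_cells, YoungDiagram.mem_cells]
  rcases Nat.eq_zero_or_pos i with hi | hi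
  · subst hi
    rw [YoungDiagram.mem_iff_lt_rowLen, YoungDiagram.mem_iff_lt_rowLen, h0]
  rcases Nat.eq_zero_or_pos j with hj | hj
  · subst hj
    rw [YoungDiagram.mem_iff_lt_colLen, YoungDiagram.mem_iff_lt_colLen, h0']
  have key : ∀ γ : YoungDiagram, (i, j) ∈ γ ↔ (i - 1, j - 1) ∈ interior γ := by
    intro γ
    rw [mem_interior]
    simp only
    have e1 : i - 1 + 1 = i := by omega
    have e2 : j - 1 + 1 = j := by omega
    rw [e1, e2]
  rw [key, key, hint]

lemma char : ∀ N (γ : YoungDiagram), γ.cells.card ≤ N → γ.transpose = γ → IsTCore γ 3 →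
    ∃ m, m % 3 ≠ 2 ∧ γ = D m := by
  intro N
  induction N with
  | zero =>
    intro γ hcard _ _
    refine ⟨0, by omega, ?_⟩
    have hγ : γ.cells = ∅ := Finset.card_eq_zero.1 (by omega)
    have hD : (D 0).cells = ∅ := by simp [D]
    ext c
    rw [hγ, hD]
  | succ N ih =>
    intro γ hcard hsc hcore
    rcases Nat.eq_zero_or_pos γ.cells.card with hemp | hpos
    · refine ⟨0, by omega, ?_⟩
      have hγ : γ.cells = ∅ := Finset.card_eq_zero.1 hemp
      have hD : (D 0).cells = ∅ := by simp [D]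
      ext c
      rw [hγ, hD]
    -- γ is nonempty
    obtain ⟨⟨x, y⟩, hxy⟩ := Finset.card_pos.1 hpos
    have h00 : (0, 0) ∈ γ :=
      γ.up_left_mem (Nat.zero_le x) (Nat.zero_le y) (YoungDiagram.mem_cells _ |>.1 hxy)
    set a := γ.rowLen 0 with ha_def
    have ha1 : 1 ≤ a := YoungDiagram.mem_iff_lt_rowLen.1 h00
    have hcol0 : γ.colLen 0 = a := by rw [colLen_of_sc hsc]
    -- apply induction hypothesis to the interior
    obtain ⟨p, hp2, hμ⟩ := ih (interior γ)
      (by have := card_interior_lt h00; omega)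
      (transpose_interior hsc) (isTCore_interior hcore)
    -- hook length of cell (0,0)
    have h2a : a % 3 ≠ 2 := by
      have hh := hcore (0, 0) (YoungDiagram.mem_cells _ |>.2 h00)
      rw [hookLen] at hh
      simp only at hh
      rw [hcol0, ← ha_def] at hh
      omega
    -- hook lengths in the first row, columns ≥ 1
    have hookrow : ∀ c, 1 ≤ c → c < a → ¬ 3 ∣ (a + R p (c - 1) - c) := by
      intro c h1 h2
      have hmem : (0, c) ∈ γ := YoungDiagram.mem_iff_lt_rowLen.2 h2
      have hclpos : 1 ≤ γ.colLen c := YoungDiagram.mem_iff_lt_colLen.1 hmem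
      have hint : (interior γ).colLen (c - 1) = γ.colLen (c - 1 + 1) - 1 :=
        colLen_interior (c - 1)
      have he : c - 1 + 1 = c := by omega
      rw [he] at hint
      have hR : (interior γ).colLen (c - 1) = R p (c - 1) := by rw [hμ, colLen_D]
      have hcl : γ.colLen c = R p (c - 1) + 1 := by omega
      have hh := hcore (0, c) (YoungDiagram.mem_cells _ |>.2 hmem)
      rw [hookLen] at hh
      simp only at hh
      rw [← ha_def, hcl] at hh
      have heq : a + (R p (c - 1) + 1) - 0 - c - 1 = a + R p (c - 1) - c := by omega
      rwa [heq] at hh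
    -- a ≤ p + 3
    have hle : a ≤ p + 3 := by
      by_contra hgt
      push_neg at hgt
      have hR0 : R p (a - 4) = 0 := by
        rw [R]
        split_ifs <;> omega
      have := hookrow (a - 3) (by omega) (by omega)
      have he : a - 3 - 1 = a - 4 := by omega
      rw [he, hR0] at this
      exact this ⟨(a - (a - 3)) / 3, by omega⟩
    -- if p ≥ 1 then a ≥ p + 1
    have hge : 1 ≤ p → p + 1 ≤ a := by
      intro hp1
      have hm : (0, p - 1) ∈ interior γ := by
        rw [hμ, mem_D]
        simp only [Nat.zero_min, Nat.zero_max]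
        omega
      have hm2 : (1, p) ∈ γ := by
        have := mem_interior.1 hm
        simp only at this
        have he : p - 1 + 1 = p := by omega
        rwa [he] at this
      have hm3 : (0, p) ∈ γ := γ.up_left_mem (by omega) (le_refl p) hm2
      exact YoungDiagram.mem_iff_lt_rowLen.1 hm3
    -- conclude a = p + 3 when p ≥ 1
    have key : a - 3 = p := by
      rcases Nat.eq_zero_or_pos p with hp0 | hp1
      · omega
      have hge' := hge hp1
      -- a ≠ p + 2
      have hne2 : a ≠ p + 2 := by
        intro haeq
        have hR1 : R p (p - 1) = 1 := by
          rw [R]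
          split_ifs <;> omega
        have := hookrow p (by omega) (by omega)
        rw [hR1] at this
        exact this ⟨(a + 1 - p) / 3, by omega⟩
      -- a ≠ p + 1
      have hne1 : a ≠ p + 1 := by
        intro haeq
        rcases Nat.lt_or_ge p 3 with hp3 | hp3
        · -- p = 1 since p % 3 ≠ 2, 1 ≤ p < 3
          have : p = 1 := by omega
          omega
        · have hR1 : R p (p - 2) = 1 := by
            rw [R]
            split_ifs <;> omega
          have := hookrow (p - 1) (by omega) (by omega)
          have he : p - 1 - 1 = p - 2 := by omega
          rw [he, hR1] at this
          exact this ⟨(a + 1 - (p - 1)) / 3, by omega⟩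
      omega
    refine ⟨a, h2a, ?_⟩
    apply eq_of_parts
    · rw [rowLen_D, R]
      split_ifs <;> omega
    · rw [hcol0, colLen_D, R]
      split_ifs <;> omega
    · rw [interior_D, key, hμ]

end SC3


theorem stmt10 (n : ℕ) (hn : 0 < n) :
    ((∃ γ : YoungDiagram, γ.cells.card = n ∧ γ.transpose = γ ∧ IsTCore γ 3) ↔
      ∃ r : ℕ, 1 ≤ r ∧ (n = r * (3 * r + 2) ∨ n = r * (3 * r - 2))) ∧
    (∀ γ₁ γ₂ : YoungDiagram,
      (γ₁.cells.card = n ∧ γ₁.transpose = γ₁ ∧ IsTCore γ₁ 3) →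
      (γ₂.cells.card = n ∧ γ₂.transpose = γ₂ ∧ IsTCore γ₂ 3) → γ₁ = γ₂) := by
  constructor
  · constructor
    · rintro ⟨γ, hcard, hsc, hcore⟩
      obtain ⟨m, hm2, rfl⟩ := SC3.char γ.cells.card γ le_rfl hsc hcore
      have hm1 : 1 ≤ m := by
        by_contra h
        push_neg at h
        interval_cases m
        rw [SC3.card_D_zero] at hcard
        omega
      set q := m / 3 with hq
      have h33 : m % 3 = 0 ∨ m % 3 = 1 ∨ m % 3 = 2 := by omega
      rcases h33 with h3 | h3 | h3
      · have hm : m = 3 * q := by omega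
        have hq1 : 1 ≤ q := by omega
        refine ⟨q, hq1, Or.inl ?_⟩
        rw [← hcard, hm, SC3.card_D_mul3]
      · have hm : m = 3 * q + 1 := by omega
        refine ⟨q + 1, by omega, Or.inr ?_⟩
        have he : (q + 1) * (3 * (q + 1) - 2) = (q + 1) * (3 * q + 1) := by
          have : 3 * (q + 1) - 2 = 3 * q + 1 := by omega
          rw [this]
        rw [he, ← hcard, hm, SC3.card_D_mul3add1]
      · exact absurd h3 hm2
    · rintro ⟨r, hr, hn' | hn'⟩
      · exact ⟨SC3.D (3 * r), by rw [SC3.card_D_mul3, hn'], SC3.transpose_D _,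
          SC3.isTCore_D (by omega)⟩
      · obtain ⟨s, rfl⟩ : ∃ s, r = s + 1 := ⟨r - 1, by omega⟩
        refine ⟨SC3.D (3 * s + 1), ?_, SC3.transpose_D _, SC3.isTCore_D (by omega)⟩
        rw [SC3.card_D_mul3add1, hn']
        have : 3 * (s + 1) - 2 = 3 * s + 1 := by omega
        rw [this]
  · rintro γ₁ γ₂ ⟨hc1, hs1, ht1⟩ ⟨hc2, hs2, ht2⟩
    obtain ⟨m₁, _, rfl⟩ := SC3.char γ₁.cells.card γ₁ le_rfl hs1 ht1
    obtain ⟨m₂, _, rfl⟩ := SC3.char γ₂.cells.card γ₂ le_rfl hs2 ht2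
    have : m₁ = m₂ := SC3.card_D_strictMono.injective (by
      show (SC3.D m₁).cells.card = (SC3.D m₂).cells.card
      rw [hc1, hc2])
    rw [this]
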